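/- Let X = ℓ_p²(ℂ) with 1 < p < ∞, i.e., ℂ² with the norm ‖(z₁, z₂)‖ = (|z₁|^p + |z₂|^p)^{1/p}. If (z₁, z₂) is a unit vector with z₂ ≠ 0, then (z₁, z₂) ⊥_B (1, −(|z₁|^{p−2} z̄₁)/(|z₂|^{p−2} z̄₂)), where ⊥_B is Birkhoff-James orthogonality: ‖u + λv‖ ≥ ‖u‖ for all λ ∈ ℂ. -/

import Mathlib

noncomputable def lpNorm (p : ℝ) (z : ℂ × ℂ) : ℝ :=
  (‖z.1‖ ^ p + ‖z.2‖ ^ p) ^ (1 / p)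

lemma aux_abs_mul_sq (p : ℝ) (hp : 1 < p) (z : ℂ) :
    ‖z‖ ^ (p - 2) * ‖z‖ ^ (2 : ℕ) = ‖z‖ ^ p := by
  rcases eq_or_ne z 0 with rfl | hz
  · simp [Real.zero_rpow (show p ≠ 0 by positivity)]
  · rw [← Real.rpow_natCast (‖z‖) 2, ← Real.rpow_add (norm_pos_iff.mpr hz)]
    norm_num

lemma aux_abs_coeff (p : ℝ) (hp : 1 < p) (z : ℂ) :
    ‖((‖z‖ ^ (p - 2) : ℝ) : ℂ) * (starRingEnd ℂ) z‖
      = ‖z‖ ^ (p - 1) := by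
  rcases eq_or_ne z 0 with rfl | hz
  · simp [Real.zero_rpow (show p - 1 ≠ 0 by intro h; nlinarith)]
  · rw [norm_mul, Complex.norm_real, Complex.norm_conj,
      Real.norm_of_nonneg (Real.rpow_nonneg (norm_nonneg z) _)]
    have h1 : ‖z‖ ^ (p - 2) * ‖z‖
        = ‖z‖ ^ (p - 2) * ‖z‖ ^ (1 : ℝ) := by
      rw [Real.rpow_one]
    rw [h1, ← Real.rpow_add (norm_pos_iff.mpr hz)]
    ring_nf

theorem stmt_18 (p : ℝ) (hp : 1 < p) (z₁ z₂ : ℂ)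
    (hunit : lpNorm p (z₁, z₂) = 1) (hz₂ : z₂ ≠ 0) :
    ∀ lam : ℂ,
      lpNorm p ((z₁, z₂) + lam • ((1 : ℂ),
          -(((‖z₁‖ ^ (p - 2) : ℝ) : ℂ) * (starRingEnd ℂ) z₁) /
            (((‖z₂‖ ^ (p - 2) : ℝ) : ℂ) * (starRingEnd ℂ) z₂))) ≥
        lpNorm p (z₁, z₂) := by
  intro lam
  have hp0 : (0:ℝ) < p := by linarith
  have hp1 : (0:ℝ) < p - 1 := by linarith
  set q : ℝ := p / (p - 1) with hqdef
  have hpq : p.HolderConjugate q := (Real.holderConjugate_iff_eq_conjExponent hp).2 hqdef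
  set a₁ : ℂ := ((‖z₁‖ ^ (p - 2) : ℝ) : ℂ) * (starRingEnd ℂ) z₁ with ha₁def
  set a₂ : ℂ := ((‖z₂‖ ^ (p - 2) : ℝ) : ℂ) * (starRingEnd ℂ) z₂ with ha₂def
  have ha₂ : a₂ ≠ 0 := by
    apply mul_ne_zero
    · simp only [ne_eq, Complex.ofReal_eq_zero]
      exact (Real.rpow_pos_of_pos (norm_pos_iff.mpr hz₂) _).ne'
    · simpa using hz₂
  set w₁ : ℂ := z₁ + lam * 1 with hw₁def
  set w₂ : ℂ := z₂ + lam * (-a₁ / a₂) with hw₂def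
  -- S = 1
  have hSnn : (0:ℝ) ≤ ‖z₁‖ ^ p + ‖z₂‖ ^ p := by positivity
  have hunit' : (‖z₁‖ ^ p + ‖z₂‖ ^ p) ^ (1 / p) = 1 := by
    simpa [lpNorm] using hunit
  have hS : ‖z₁‖ ^ p + ‖z₂‖ ^ p = 1 := by
    calc ‖z₁‖ ^ p + ‖z₂‖ ^ p
        = (‖z₁‖ ^ p + ‖z₂‖ ^ p) ^ ((1 / p) * p) := by
          rw [one_div, inv_mul_cancel₀ hp0.ne', Real.rpow_one]
      _ = ((‖z₁‖ ^ p + ‖z₂‖ ^ p) ^ (1 / p)) ^ p :=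
          Real.rpow_mul hSnn _ _
      _ = (1:ℝ) ^ p := by rw [hunit']
      _ = 1 := Real.one_rpow p
  -- φ(u) = 1
  have hcoeff : ∀ z : ℂ, (((‖z‖ ^ (p - 2) : ℝ) : ℂ) * (starRingEnd ℂ) z) * z
      = ((‖z‖ ^ p : ℝ) : ℂ) := by
    intro z
    rw [mul_assoc, mul_comm ((starRingEnd ℂ) z) z, Complex.mul_conj,
      Complex.normSq_eq_norm_sq, ← Complex.ofReal_mul]
    exact congrArg _ (aux_abs_mul_sq p hp z)
  have hphi_u : a₁ * z₁ + a₂ * z₂ = 1 := by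
    rw [ha₁def, ha₂def, hcoeff, hcoeff, ← Complex.ofReal_add, hS, Complex.ofReal_one]
  -- φ(w) = φ(u)
  have hdiv : a₂ * (-a₁ / a₂) = -a₁ := by field_simp
  have hphi_w : a₁ * w₁ + a₂ * w₂ = 1 := by
    have expand : a₁ * w₁ + a₂ * w₂
        = (a₁ * z₁ + a₂ * z₂) + lam * (a₁ + a₂ * (-a₁ / a₂)) := by
      rw [hw₁def, hw₂def]; ring
    rw [expand, hdiv, hphi_u]; ring
  -- Hölder
  have habs1 : ‖a₁‖ = ‖z₁‖ ^ (p - 1) := aux_abs_coeff p hp z₁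
  have habs2 : ‖a₂‖ = ‖z₂‖ ^ (p - 1) := aux_abs_coeff p hp z₂
  have hq_sum : ‖a₁‖ ^ q + ‖a₂‖ ^ q = 1 := by
    rw [habs1, habs2, ← Real.rpow_mul (norm_nonneg z₁),
      ← Real.rpow_mul (norm_nonneg z₂), hpq.sub_one_mul_conj, hS]
  have holder : ‖a₁‖ * ‖w₁‖ + ‖a₂‖ * ‖w₂‖ ≤
      (‖a₁‖ ^ q + ‖a₂‖ ^ q) ^ (1 / q) *
        (‖w₁‖ ^ p + ‖w₂‖ ^ p) ^ (1 / p) := by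
    have := Real.inner_le_Lp_mul_Lq_of_nonneg (s := (Finset.univ : Finset (Fin 2)))
      (f := ![‖a₁‖, ‖a₂‖]) (g := ![‖w₁‖, ‖w₂‖])
      hpq.symm (by intro i _; fin_cases i <;> simp [norm_nonneg])
      (by intro i _; fin_cases i <;> simp [norm_nonneg])
    simpa [Fin.sum_univ_two] using this
  have hkey : (1:ℝ) ≤ (‖w₁‖ ^ p + ‖w₂‖ ^ p) ^ (1 / p) := by
    calc (1:ℝ) = ‖a₁ * w₁ + a₂ * w₂‖ := by rw [hphi_w]; simp
    _ ≤ ‖a₁ * w₁‖ + ‖a₂ * w₂‖ := norm_add_le _ _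
    _ = ‖a₁‖ * ‖w₁‖ + ‖a₂‖ * ‖w₂‖ := by
        rw [norm_mul a₁ w₁, norm_mul a₂ w₂]
    _ ≤ _ := holder
    _ = (‖w₁‖ ^ p + ‖w₂‖ ^ p) ^ (1 / p) := by
        rw [hq_sum, Real.one_rpow, one_mul]
  rw [ge_iff_le, hunit]
  have hfinal : lpNorm p ((z₁, z₂) + lam • ((1 : ℂ), -a₁ / a₂))
      = (‖w₁‖ ^ p + ‖w₂‖ ^ p) ^ (1 / p) := by
    simp only [lpNorm, Prod.fst_add, Prod.snd_add, Prod.smul_mk, smul_eq_mul,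
      hw₁def, hw₂def]
  rw [hfinal]
  exact hkey
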